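/- Consider N interconnected scalar systems ẋ_i = f_i(x_i) + u_i with f_i : ℝ → ℝ continuous, each semi-passive, with coupling inputs u_i = −Σ_{j≠i} a_{ij}(x_i − x_j), a_{ij} ≥ 0. Suppose the directed graph on the N nodes with an edge from node j to node i whenever a_{ij} > 0 is strongly connected. Then every solution t ↦ x(t) = (x_1(t),…,x_N(t)) of the closed-loop system defined on [0,∞) is bounded. -/

import Mathlib

open Finset Topology Filter

/-- The scalar system `ẋ = f(x) + u` defines a semi-passive map `u ↦ x`:
there exist a `C¹`, radially unbounded, nonnegative storage function `V`,
a continuous function `H`, a positive continuous function `ψ` (on `[0,∞)`),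
and a constant `ρ > 0` such that `V'(x)(f(x)+u) ≤ u·x − H(x)` for all `x, u`,
and `H(x) ≥ ψ(|x|)` whenever `|x| ≥ ρ`. -/
def SemiPassive (f : ℝ → ℝ) : Prop :=
  ∃ (V H ψ : ℝ → ℝ) (ρ : ℝ),
    ContDiff ℝ 1 V ∧
    (∀ x, 0 ≤ V x) ∧
    Filter.Tendsto V (Filter.comap (fun x : ℝ => |x|) Filter.atTop) Filter.atTop ∧
    Continuous H ∧
    ContinuousOn ψ (Set.Ici 0) ∧
    (∀ r : ℝ, 0 ≤ r → 0 < ψ r) ∧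
    0 < ρ ∧
    (∀ x u : ℝ, deriv V x * (f x + u) ≤ u * x - H x) ∧
    (∀ x : ℝ, ρ ≤ |x| → ψ |x| ≤ H x)

/-- In the weighted directed graph with weights `a` (an edge from node `j` to
node `i` whenever `a i j > 0`), node `j` is reachable from node `i`. -/
def Reachable {N : ℕ} (a : Fin N → Fin N → ℝ) : Fin N → Fin N → Prop :=
  Relation.ReflTransGen (fun u v => 0 < a v u)

lemma semipassive_sign {f : ℝ → ℝ} (h : SemiPassive f) :
    ∃ ρ : ℝ, 0 < ρ ∧ ∀ s : ℝ, ρ ≤ |s| → s * f s < 0 := by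
  obtain ⟨V, H, ψ, ρ, _, _, _, _, _, hψ, hρ, hVH, hHψ⟩ := h
  refine ⟨ρ, hρ, fun s hs => ?_⟩
  have hd : deriv V s = s := by
    by_contra hne
    have hd0 : deriv V s - s ≠ 0 := sub_ne_zero.mpr hne
    have key : ∀ u : ℝ, u * (deriv V s - s) ≤ - H s - deriv V s * f s := by
      intro u; nlinarith [hVH s u]
    have := key ((- H s - deriv V s * f s + 1) / (deriv V s - s))
    rw [div_mul_cancel₀ _ hd0] at this
    linarith
  have h0 := hVH s 0
  rw [hd] at h0
  have hψpos := hψ |s| (abs_nonneg s)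
  have hH := hHψ s hs
  nlinarith

lemma aux_one_sided {N : ℕ} (f : Fin N → ℝ → ℝ) (a : Fin N → Fin N → ℝ)
    (ha : ∀ i j, 0 ≤ a i j)
    (x : ℝ → Fin N → ℝ)
    (hx : ∀ i : Fin N, ∀ t ∈ Set.Ici (0 : ℝ),
      HasDerivWithinAt (fun s => x s i)
        (f i (x t i) - ∑ j ∈ Finset.univ.erase i, a i j * (x t i - x t j))
        (Set.Ici 0) t)
    (B : ℝ) (hB0 : ∀ i, x 0 i ≤ B)
    (hfs : ∀ i, ∀ s : ℝ, B < s → f i s < 0) :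
    ∀ t ∈ Set.Ici (0:ℝ), ∀ i, x t i ≤ B := by
  have hcont : ∀ i, ContinuousOn (fun t => x t i) (Set.Ici 0) :=
    fun i t ht => (hx i t ht).continuousWithinAt
  -- main claim with slack ε
  have main : ∀ ε : ℝ, 0 < ε → ∀ t ∈ Set.Ici (0:ℝ), ∀ i, x t i < B + ε := by
    intro ε hε
    by_contra hcon
    push_neg at hcon
    obtain ⟨t₁, ht₁, i₁, hi₁⟩ := hcon
    set T : Set ℝ := {t | t ∈ Set.Ici (0:ℝ) ∧ ∃ i, B + ε ≤ x t i} with hT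
    have hTne : T.Nonempty := ⟨t₁, ht₁, i₁, hi₁⟩
    have hTclosed : IsClosed T := by
      have : T = ⋃ i : Fin N, (Set.Ici (0:ℝ) ∩ (fun t => x t i) ⁻¹' Set.Ici (B + ε)) := by
        ext t
        simp only [hT, Set.mem_setOf_eq, Set.mem_iUnion, Set.mem_inter_iff, Set.mem_preimage,
          Set.mem_Ici]
        tauto
      rw [this]
      exact isClosed_iUnion_of_finite fun i =>
        (hcont i).preimage_isClosed_of_isClosed isClosed_Ici isClosed_Ici
    have hTbdd : BddBelow T := ⟨0, fun t ht => ht.1⟩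
    set t₀ := sInf T with ht₀def
    have ht₀T : t₀ ∈ T := hTclosed.csInf_mem hTne hTbdd
    obtain ⟨ht₀0, i, hi⟩ := ht₀T
    have ht₀pos : 0 < t₀ := by
      rcases lt_or_eq_of_le (Set.mem_Ici.mp ht₀0) with h | h
      · exact h
      · exfalso; rw [← h] at hi; have := hB0 i; linarith
    have hlt : ∀ s : ℝ, 0 ≤ s → s < t₀ → ∀ j, x s j < B + ε := by
      intro s hs0 hst j
      by_contra hc
      push_neg at hc
      exact absurd (csInf_le hTbdd ⟨hs0, j, hc⟩) (not_le.mpr hst)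
    -- all coordinates at t₀ are ≤ B + ε, by left-continuity
    have hle : ∀ j, x t₀ j ≤ B + ε := by
      intro j
      have hne : (𝓝[Set.Ico 0 t₀] t₀).NeBot := by
        apply mem_closure_iff_nhdsWithin_neBot.mp
        rw [closure_Ico (ne_of_lt ht₀pos)]
        exact Set.right_mem_Icc.mpr (le_of_lt ht₀pos)
      have htd : Filter.Tendsto (fun s => x s j) (𝓝[Set.Ico 0 t₀] t₀) (𝓝 (x t₀ j)) :=
        ((hcont j) t₀ ht₀0).mono_left (nhdsWithin_mono _ Set.Ico_subset_Ici_self)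
      refine le_of_tendsto htd ?_
      filter_upwards [self_mem_nhdsWithin] with s hs
      exact le_of_lt (hlt s hs.1 hs.2 j)
    have hxi : x t₀ i = B + ε := le_antisymm (hle i) hi
    -- derivative at t₀ is negative
    have hD : HasDerivAt (fun s => x s i)
        (f i (x t₀ i) - ∑ j ∈ Finset.univ.erase i, a i j * (x t₀ i - x t₀ j)) t₀ :=
      (hx i t₀ ht₀0).hasDerivAt (Ici_mem_nhds ht₀pos)
    have hdneg : f i (x t₀ i) - ∑ j ∈ Finset.univ.erase i, a i j * (x t₀ i - x t₀ j) < 0 := by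
      have h1 : f i (x t₀ i) < 0 := by
        rw [hxi]; exact hfs i _ (by linarith)
      have h2 : 0 ≤ ∑ j ∈ Finset.univ.erase i, a i j * (x t₀ i - x t₀ j) := by
        apply Finset.sum_nonneg
        intro j _
        apply mul_nonneg (ha i j)
        rw [hxi]
        linarith [hle j]
      linarith
    rw [hasDerivAt_iff_tendsto_slope] at hD
    have hev : ∀ᶠ s in 𝓝[≠] t₀, slope (fun s => x s i) t₀ s < 0 :=
      hD.eventually_lt_const hdneg
    have hev2 : ∀ᶠ s in 𝓝 t₀, (0:ℝ) < s := eventually_gt_nhds ht₀pos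
    have hleft : (𝓝[Set.Iio t₀] t₀).NeBot := inferInstance
    have hev3 : ∀ᶠ s in 𝓝[Set.Iio t₀] t₀,
        slope (fun s => x s i) t₀ s < 0 ∧ (0:ℝ) < s ∧ s < t₀ := by
      have e1 := nhdsWithin_mono t₀ (fun s (hs : s ∈ Set.Iio t₀) => ne_of_lt hs) hev
      have e2 := eventually_nhdsWithin_of_eventually_nhds (s := Set.Iio t₀) hev2
      filter_upwards [e1, e2, self_mem_nhdsWithin] with s h1 h2 h3
      exact ⟨h1, h2, h3⟩
    obtain ⟨s, hs1, hs2, hs3⟩ := hev3.exists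
    have hslope : (x s i - x t₀ i) / (s - t₀) < 0 := by
      simpa [slope_def_field, div_eq_iff] using hs1
    have hnum : 0 < x s i - x t₀ i := by
      rcases div_neg_iff.mp hslope with ⟨h, h'⟩ | ⟨h, h'⟩
      · linarith
      · linarith
    have := hlt s (le_of_lt hs2) hs3 i
    rw [hxi] at hnum
    linarith
  intro t ht i
  by_contra h
  push_neg at h
  have := main ((x t i - B) / 2) (by linarith) t ht i
  linarith

/-- Boundedness of solutions for a network of heterogeneous semi-passive
scalar systems `ẋᵢ = fᵢ(xᵢ) + uᵢ` with diffusive coupling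
`uᵢ = −∑_{j≠i} aᵢⱼ (xᵢ − xⱼ)`, whose interconnection graph is strongly
connected. -/
theorem network_bounded_of_semipassive_of_strongly_connected
    (N : ℕ) (hN : 0 < N)
    (f : Fin N → ℝ → ℝ)
    (hf : ∀ i, Continuous (f i))
    (hsp : ∀ i, SemiPassive (f i))
    (a : Fin N → Fin N → ℝ)
    (ha : ∀ i j, 0 ≤ a i j)
    (hsc : ∀ i j : Fin N, Reachable a i j)
    (x : ℝ → Fin N → ℝ)
    (hx : ∀ i : Fin N, ∀ t ∈ Set.Ici (0 : ℝ),
      HasDerivWithinAt (fun s => x s i)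
        (f i (x t i) - ∑ j ∈ Finset.univ.erase i, a i j * (x t i - x t j))
        (Set.Ici 0) t) :
    ∃ c : ℝ, ∀ t ∈ Set.Ici (0 : ℝ), ∀ i : Fin N, |x t i| ≤ c := by
  choose ρ hρpos hsign using fun i => semipassive_sign (hsp i)
  set B : ℝ := ∑ j, (ρ j + |x 0 j|) with hBdef
  have hterm : ∀ j : Fin N, 0 ≤ ρ j + |x 0 j| :=
    fun j => add_nonneg (le_of_lt (hρpos j)) (abs_nonneg _)
  have hBi : ∀ i : Fin N, ρ i + |x 0 i| ≤ B :=
    fun i => Finset.single_le_sum (fun j _ => hterm j) (Finset.mem_univ i)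
  have hρB : ∀ i, ρ i ≤ B := fun i => le_trans (by linarith [abs_nonneg (x 0 i)]) (hBi i)
  have hxB : ∀ i, |x 0 i| ≤ B := fun i => le_trans (by linarith [(hρpos i).le]) (hBi i)
  -- upper bound
  have hupper : ∀ t ∈ Set.Ici (0:ℝ), ∀ i, x t i ≤ B := by
    apply aux_one_sided f a ha x hx B
    · exact fun i => le_trans (le_abs_self _) (hxB i)
    · intro i s hs
      have hs0 : 0 < s := lt_of_le_of_lt (le_trans (hρpos i).le (hρB i)) hs
      have := hsign i s (by rw [abs_of_pos hs0]; exact le_trans (hρB i) hs.le)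
      nlinarith
  -- lower bound via the reflected system
  have hlower : ∀ t ∈ Set.Ici (0:ℝ), ∀ i, -(x t i) ≤ B := by
    apply aux_one_sided (fun i s => -f i (-s)) a ha (fun t i => -(x t i))
    · intro i t ht
      have h := (hx i t ht).neg
      refine h.congr_deriv ?_
      beta_reduce
      have hsum : ∑ j ∈ Finset.univ.erase i, a i j * (-(x t i) - -(x t j))
          = -∑ j ∈ Finset.univ.erase i, a i j * (x t i - x t j) := by
        rw [← Finset.sum_neg_distrib]
        exact Finset.sum_congr rfl (fun j _ => by ring)
      rw [hsum]
      simp only [neg_neg]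
      ring
    · exact fun i => le_trans (neg_le_abs _) (hxB i)
    · intro i s hs
      have hs0 : 0 < s := lt_of_le_of_lt (le_trans (hρpos i).le (hρB i)) hs
      have := hsign i (-s) (by rw [abs_neg, abs_of_pos hs0]; exact le_trans (hρB i) hs.le)
      nlinarith
  exact ⟨B, fun t ht i => abs_le.mpr ⟨neg_le.mp (hlower t ht i), hupper t ht i⟩⟩
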